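/- Fix k > 0 and polynomial weights w_i = i^{1+k}. Suppose b_i ≥ (Q_1 + δ)a_i for i ≥ N_z with δ > 0, a_i ≥ C₁ > 0, and a_i, b_i ≤ C₂ i. Then one can choose Ñ ≥ N_z + 1 large enough and δ_k > 0 small enough so that: for all real g with |g| < δ_k and all sequences h with ∑ Q_i i^{2+k}|h_i| < ∞ and ∑ Q_i i h_i = 0, the operator A(g) defined weakly by ∑ Q_i (A(g)h)_i φ_i = ∑_{i≥Ñ} Q_i Q_1 a_i (h_i - h_{i+1} + g h_i)(φ_{i+1} - φ_i - φ_1) - Q_{Ñ-1}Q_1 a_{Ñ-1}h_Ñ(φ_Ñ - φ_{Ñ-1} - φ_1) satisfies ⟨sgn h, A(g)h⟩_{X_{1+k}^*, X_{1+k}} ≤ -C ∑_{i≥Ñ} Q_i a_i (w_{i+1} - w_i)|h_i| ≤ 0 for some C > 0. -/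

import Mathlib

open Real Filter

section helpers

private lemma bd_sign_mul_self (x : ℝ) : x * Real.sign x = |x| := by
  rcases lt_trichotomy x 0 with h|h|h
  · rw [Real.sign_of_neg h, abs_of_neg h]; ring
  · simp [h]
  · rw [Real.sign_of_pos h, abs_of_pos h]; ring

private lemma bd_abs_sign (x : ℝ) : |Real.sign x| ≤ 1 := by
  rcases Real.sign_apply_eq x with h|h|h <;> rw [h] <;> norm_num

private lemma bd_mul_sign_le (x y : ℝ) : x * Real.sign y ≤ |x| := by
  calc x * Real.sign y ≤ |x * Real.sign y| := le_abs_self _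
    _ = |x| * |Real.sign y| := abs_mul _ _
    _ ≤ |x| * 1 := mul_le_mul_of_nonneg_left (bd_abs_sign y) (abs_nonneg x)
    _ = |x| := mul_one _

private lemma bd_core (g h h' w w' s1 : ℝ) (hg0 : 0 ≤ 1 + g) (hw : 0 ≤ w) (hww : w ≤ w')
    (hs1 : |s1| ≤ 1) :
    (h - h' + g * h) * (w' * Real.sign h' - w * Real.sign h - s1)
      ≤ ((1 + g) * (w' - w) + (1 + |g|)) * |h| - ((w' - w) - 1) * |h'| := by
  have hw' : 0 ≤ w' := le_trans hw hww
  have t1 : (1+g) * w' * (h * Real.sign h') ≤ (1+g) * w' * |h| :=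
    mul_le_mul_of_nonneg_left (bd_mul_sign_le h h') (by positivity)
  have t2 : (1+g) * w * (h * Real.sign h) = (1+g) * w * |h| := by rw [bd_sign_mul_self]
  have t3 : -((1+g) * (h * s1)) ≤ (1 + |g|) * |h| := by
    have h1 : |(1+g) * (h * s1)| ≤ (1+|g|) * |h| := by
      rw [abs_mul, abs_mul]
      have ha : |1+g| ≤ 1 + |g| := (abs_add_le 1 g).trans (by simp)
      have hb : |h| * |s1| ≤ |h| * 1 := mul_le_mul_of_nonneg_left hs1 (abs_nonneg h)
      calc |1+g| * (|h| * |s1|) ≤ (1+|g|) * (|h| * 1) :=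
            mul_le_mul ha hb (by positivity) (by positivity)
        _ = (1+|g|) * |h| := by ring
    have := neg_abs_le ((1+g) * (h * s1))
    linarith
  have t4 : h' * Real.sign h' = |h'| := bd_sign_mul_self h'
  have t5 : w * (h' * Real.sign h) ≤ w * |h'| :=
    mul_le_mul_of_nonneg_left (bd_mul_sign_le h' h) hw
  have t6 : h' * s1 ≤ |h'| := by
    calc h' * s1 ≤ |h' * s1| := le_abs_self _
      _ = |h'| * |s1| := abs_mul _ _
      _ ≤ |h'| * 1 := mul_le_mul_of_nonneg_left hs1 (abs_nonneg h')
      _ = |h'| := mul_one _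
  nlinarith [t1, t3, t5, t6, t2, t4]

private lemma bd_boundary (x y wA wB s1 : ℝ) (hwA : 0 ≤ wA) (hs1 : |s1| ≤ 1) :
    (wB - wA - 1) * |x| ≤ x * (wB * Real.sign x - wA * Real.sign y - s1) := by
  have t1 : wB * (x * Real.sign x) = wB * |x| := by rw [bd_sign_mul_self]
  have t2 : wA * (x * Real.sign y) ≤ wA * |x| :=
    mul_le_mul_of_nonneg_left (bd_mul_sign_le x y) hwA
  have t3 : x * s1 ≤ |x| := by
    calc x * s1 ≤ |x * s1| := le_abs_self _
      _ = |x| * |s1| := abs_mul _ _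
      _ ≤ |x| * 1 := mul_le_mul_of_nonneg_left hs1 (abs_nonneg x)
      _ = |x| := mul_one _
  nlinarith [t1, t2, t3]

private lemma bd_rpow_lb (k x : ℝ) (hk : 0 < k) (hx : 1 ≤ x) :
    x^(1+k) + (1+k) * x^k ≤ (x+1)^(1+k) := by
  have hx0 : 0 < x := lt_of_lt_of_le one_pos hx
  have hone : (1:ℝ) + k ≠ 0 := by positivity
  have hsx : (-1:ℝ) ≤ 1/x := le_trans (by norm_num) (by positivity : (0:ℝ) ≤ 1/x)
  have hb := one_add_mul_self_le_rpow_one_add hsx (p := 1+k) (by linarith)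
  have e1 : (1:ℝ) + 1/x = (x+1)/x := by field_simp
  have e2 : ((x+1)/x)^(1+k) = (x+1)^(1+k) / x^(1+k) := Real.div_rpow (by linarith) hx0.le _
  rw [e1, e2] at hb
  have hb2 : (1 + (1+k)*(1/x)) * x^(1+k) ≤ (x+1)^(1+k) :=
    (le_div_iff₀ (by positivity)).mp hb
  have hxk : x^(1+k) = x * x^k := Real.rpow_one_add' hx0.le hone
  calc x^(1+k) + (1+k)*x^k = (1 + (1+k)*(1/x)) * x^(1+k) := by
        rw [hxk]; field_simp
    _ ≤ (x+1)^(1+k) := hb2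

private lemma bd_rpow_ub (k x : ℝ) (hk : 0 < k) (hx : 1 ≤ x) :
    (x+1)^(1+k) ≤ x^(1+k) + (1+k) * (x+1)^k := by
  have hx0 : 0 < x := lt_of_lt_of_le one_pos hx
  have hx1 : (0:ℝ) < x + 1 := by linarith
  have hone : (1:ℝ) + k ≠ 0 := by positivity
  have hs : (-1:ℝ) ≤ -1/(x+1) := by
    rw [neg_div]
    have : 1/(x+1) ≤ 1 := by rw [div_le_one hx1]; linarith
    linarith
  have hb := one_add_mul_self_le_rpow_one_add hs (p := 1+k) (by linarith)
  have e1 : (1:ℝ) + -1/(x+1) = x/(x+1) := by field_simp; ring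
  have e2 : (x/(x+1))^(1+k) = x^(1+k) / (x+1)^(1+k) := Real.div_rpow hx0.le hx1.le _
  rw [e1, e2] at hb
  have hb2 : (1 + (1+k)*(-1/(x+1))) * (x+1)^(1+k) ≤ x^(1+k) :=
    (le_div_iff₀ (by positivity)).mp hb
  have hxk : (x+1)^(1+k) = (x+1) * (x+1)^k := Real.rpow_one_add' hx1.le hone
  have e3 : (1 + (1+k)*(-1/(x+1))) * (x+1)^(1+k) = (x+1)^(1+k) - (1+k)*(x+1)^k := by
    rw [hxk]; field_simp; ring
  linarith [hb2, e3.symm.trans_le hb2]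

private lemma bd_scalar (Q1 δ g D E : ℝ) (hQ1 : 0 < Q1) (hδ : 0 < δ)
    (hg1 : |g| ≤ 1) (hg2 : |g| ≤ δ/(8*(Q1+1)))
    (hD : max 1 (4*(3*Q1+δ)/δ) ≤ D) (hE : max 1 (4*(3*Q1+δ)/δ) ≤ E)
    (hεD : (1 - δ/(8*(Q1+δ)))*D ≤ E) :
    Q1*((1+g)*D + (1+|g|)) ≤ (Q1+δ)*(E-1) - (δ/2)*D := by
  have h1 : 1 ≤ D := le_trans (le_max_left _ _) hD
  have h2 : 4*(3*Q1+δ)/δ ≤ D := le_trans (le_max_right _ _) hD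
  have h3 : 1 ≤ E := le_trans (le_max_left _ _) hE
  have h2' : 4*(3*Q1+δ) ≤ D*δ := by
    rw [div_le_iff₀ hδ] at h2; linarith
  have hgD : Q1*(g*D) ≤ (δ/8)*D := by
    have hga : g ≤ δ/(8*(Q1+1)) := le_trans (le_abs_self g) hg2
    have key : Q1*(δ/(8*(Q1+1))) ≤ δ/8 := by
      rw [mul_div_assoc', div_le_div_iff₀ (by positivity) (by norm_num)]
      nlinarith
    have hD0 : (0:ℝ) ≤ D := by linarith
    have m1 : Q1*g*D ≤ Q1*(δ/(8*(Q1+1)))*D :=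
      mul_le_mul_of_nonneg_right (mul_le_mul_of_nonneg_left hga hQ1.le) hD0
    have m2 : Q1*(δ/(8*(Q1+1)))*D ≤ (δ/8)*D := mul_le_mul_of_nonneg_right key hD0
    nlinarith [m1, m2]
  have hq : (0:ℝ) < Q1+δ := by linarith
  have hεE : (Q1+δ)*D - (δ/8)*D - (Q1+δ) ≤ (Q1+δ)*(E-1) := by
    have hm : (Q1+δ)*((1 - δ/(8*(Q1+δ)))*D) ≤ (Q1+δ)*E :=
      mul_le_mul_of_nonneg_left hεD hq.le
    have e : (Q1+δ)*((1 - δ/(8*(Q1+δ)))*D) = (Q1+δ)*D - (δ/8)*D := by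
      field_simp
    linarith
  have hQg : Q1*|g| ≤ Q1 := by nlinarith [abs_nonneg g]
  nlinarith [hgD, hεE, hQg, h2']

private lemma bd_abs4 (c X t B : ℝ) (hc : 0 ≤ c) (ht : 0 ≤ t) (hB : |X| ≤ B) :
    |c * X * t| ≤ c * B * t := by
  rw [abs_mul, abs_mul, abs_of_nonneg hc, abs_of_nonneg ht]
  exact mul_le_mul_of_nonneg_right (mul_le_mul_of_nonneg_left hB hc) ht

private lemma bd_abs_sub3 (x y z : ℝ) : |x - y - z| ≤ |x| + |y| + |z| := by
  rw [abs_le]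
  constructor
  · linarith [neg_abs_le x, le_abs_self y, le_abs_self z]
  · linarith [le_abs_self x, neg_abs_le y, neg_abs_le z]


private lemma bd_tendsto1 (k : ℝ) (hk : 0 < k) :
    Tendsto (fun i : ℕ => (1+k) * ((i:ℝ)-1)^k) atTop atTop := by
  have t0 : Tendsto (fun i : ℕ => (i:ℝ) - 1) atTop atTop := by
    have := tendsto_atTop_add_const_right atTop (-1 : ℝ) tendsto_natCast_atTop_atTop
    exact this.congr (fun i => by ring)
  have t1 : Tendsto (fun i : ℕ => ((i:ℝ)-1)^k) atTop atTop :=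
    (tendsto_rpow_atTop hk).comp t0
  exact t1.const_mul_atTop (by positivity)

private lemma bd_tendsto2 (k : ℝ) (hk : 0 < k) :
    Tendsto (fun i : ℕ => (((i:ℝ)-1)/((i:ℝ)+1))^k) atTop (nhds 1) := by
  have t2 : Tendsto (fun i : ℕ => ((i:ℝ)-1)/((i:ℝ)+1)) atTop (nhds 1) := by
    have b1 : Tendsto (fun i : ℕ => 1 - 2*(1/((i:ℝ)+1))) atTop (nhds (1 - 2*0)) :=
      tendsto_const_nhds.sub (tendsto_one_div_add_atTop_nhds_zero_nat.const_mul 2)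
    have b2 : Tendsto (fun i : ℕ => 1 - 2*(1/((i:ℝ)+1))) atTop (nhds 1) := by
      simpa using b1
    refine b2.congr (fun i => ?_)
    have hi : ((i:ℝ)+1) ≠ 0 := by positivity
    field_simp
    ring
  have hc : ContinuousAt (fun x : ℝ => x^k) 1 :=
    Real.continuousAt_rpow_const 1 k (Or.inl one_ne_zero)
  have := hc.tendsto.comp t2
  simpa [Real.one_rpow, Function.comp_def] using this

end helpers

set_option maxHeartbeats 2000000 in
/-- Uniform dissipativity, with explicit negative contribution, of the `g`-perturbed
truncated transport part `A(g)` of the Becker–Döring operator in the polynomially weighted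
space `X_{1+k} = ℓ¹(Q_i i^{1+k})`, with weights `w_i = i^{1+k}` and test sequence
`φ_i = w_i sgn(h_i)`. -/
theorem perturbed_transport_dissipative_Xk (a b Q : ℕ → ℝ) (k δ C₁ C₂ : ℝ) (Nz : ℕ)
    (hk : 0 < k) (hδ : 0 < δ) (hC₁ : 0 < C₁)
    (hpos : ∀ i, 1 ≤ i → 0 < a i ∧ 0 < b i ∧ 0 < Q i)
    (hdb : ∀ i, 1 ≤ i → Q i * Q 1 * a i = Q (i + 1) * b (i + 1))
    (hfrag : ∀ i, Nz ≤ i → (Q 1 + δ) * a i ≤ b i)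
    (hla : ∀ i, 1 ≤ i → C₁ ≤ a i)
    (hub : ∀ i, 1 ≤ i → a i ≤ C₂ * i ∧ b i ≤ C₂ * i)
    (hNz : 1 ≤ Nz) :
    ∃ Ntil : ℕ, Nz + 1 ≤ Ntil ∧ ∃ δk Cd : ℝ, 0 < δk ∧ 0 < Cd ∧
      ∀ g : ℝ, |g| < δk → ∀ h : ℕ → ℝ,
        Summable (fun i => Q i * (i : ℝ) ^ (2 + k) * |h i|) →
        (∑' i : ℕ, Q i * (i : ℝ) * h i) = 0 →
        ((∑' i : ℕ, if Ntil ≤ i then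
            Q i * Q 1 * a i * (h i - h (i + 1) + g * h i) *
              (((i + 1 : ℕ) : ℝ) ^ (1 + k) * Real.sign (h (i + 1))
                - (i : ℝ) ^ (1 + k) * Real.sign (h i)
                - (1 : ℝ) ^ (1 + k) * Real.sign (h 1))
          else 0)
          - Q (Ntil - 1) * Q 1 * a (Ntil - 1) * h Ntil *
              ((Ntil : ℝ) ^ (1 + k) * Real.sign (h Ntil)
                - ((Ntil - 1 : ℕ) : ℝ) ^ (1 + k) * Real.sign (h (Ntil - 1))
                - (1 : ℝ) ^ (1 + k) * Real.sign (h 1)))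
          ≤ -Cd * (∑' i : ℕ, if Ntil ≤ i then
              Q i * a i * (((i + 1 : ℕ) : ℝ) ^ (1 + k) - (i : ℝ) ^ (1 + k)) * |h i|
            else 0) ∧
        (0 : ℝ) ≤ Cd * (∑' i : ℕ, if Ntil ≤ i then
              Q i * a i * (((i + 1 : ℕ) : ℝ) ^ (1 + k) - (i : ℝ) ^ (1 + k)) * |h i|
            else 0) := by
  have hQ1 : 0 < Q 1 := (hpos 1 le_rfl).2.2
  have hC₂ : 0 < C₂ := by
    have h1 := (hub 1 le_rfl).1
    have h2 := hla 1 le_rfl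
    simp only [Nat.cast_one, mul_one] at h1
    linarith
  have hεpos : 0 < δ/(8*(Q 1+δ)) := by positivity
  have hεlt : δ/(8*(Q 1+δ)) < 1 := by
    rw [div_lt_one (by positivity)]
    linarith
  have hev := (((bd_tendsto1 k hk).eventually_ge_atTop (max 1 (4*(3*Q 1+δ)/δ))).and
    ((bd_tendsto2 k hk).eventually (eventually_ge_nhds (show 1 - δ/(8*(Q 1+δ)) < 1 by linarith))))
  obtain ⟨N₀, hN₀⟩ := eventually_atTop.1 hev
  refine ⟨max N₀ (Nz+2), le_trans (by omega) (le_max_right _ _),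
    min 1 (δ/(8*(Q 1+1))), δ/2, by positivity, by positivity, ?_⟩
  set Ntil := max N₀ (Nz+2) with hNtildef
  intro g hg h hsum _

  -- ==== basic setup ====
  have hNt2 : 2 ≤ Ntil := le_trans (by omega) (le_max_right _ _)
  have hNtNz : Nz + 2 ≤ Ntil := le_max_right _ _
  have hprop : ∀ i, Ntil ≤ i →
      max 1 (4*(3*Q 1+δ)/δ) ≤ (1+k)*((i:ℝ)-1)^k ∧
      1 - δ/(8*(Q 1+δ)) ≤ (((i:ℝ)-1)/((i:ℝ)+1))^k :=
    fun i hi => hN₀ i (le_trans (le_max_left _ _) hi)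
  have hg1 : |g| ≤ 1 := le_of_lt (lt_of_lt_of_le hg (min_le_left _ _))
  have hg2 : |g| ≤ δ/(8*(Q 1+1)) := le_of_lt (lt_of_lt_of_le hg (min_le_right _ _))
  have hg0 : 0 ≤ 1 + g := by have := (abs_le.mp hg1).1; linarith
  -- ==== weight facts ====
  have hw1 : ∀ i : ℕ, 1 ≤ i → (1:ℝ) ≤ (i:ℝ)^(1+k) := by
    intro i hi
    have hci : (1:ℝ) ≤ (i:ℝ) := by exact_mod_cast hi
    calc (1:ℝ) = 1^(1+k) := (Real.one_rpow _).symm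
      _ ≤ (i:ℝ)^(1+k) := Real.rpow_le_rpow zero_le_one hci (by positivity)
  have hwmono : ∀ i : ℕ, (i:ℝ)^(1+k) ≤ ((i+1:ℕ):ℝ)^(1+k) := by
    intro i
    exact Real.rpow_le_rpow (Nat.cast_nonneg i) (by push_cast; linarith) (by positivity)
  have hwmono2 : ∀ i j : ℕ, i ≤ j → (i:ℝ)^(1+k) ≤ (j:ℝ)^(1+k) := by
    intro i j hij
    exact Real.rpow_le_rpow (Nat.cast_nonneg i) (by exact_mod_cast hij) (by positivity)
  have hw2 : ∀ i : ℕ, 1 ≤ i → ((i+1:ℕ):ℝ)^(1+k) ≤ 2^(1+k) * (i:ℝ)^(1+k) := by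
    intro i hi
    have hci : (1:ℝ) ≤ (i:ℝ) := by exact_mod_cast hi
    have h1 : ((i+1:ℕ):ℝ)^(1+k) ≤ (2*(i:ℝ))^(1+k) :=
      Real.rpow_le_rpow (by positivity) (by push_cast; linarith) (by positivity)
    rwa [Real.mul_rpow (by norm_num) (by positivity)] at h1
  have he1 : ∀ i : ℕ, 1 ≤ i → (i:ℝ) * (i:ℝ)^(1+k) = (i:ℝ)^(2+k) := by
    intro i hi
    have hci : (0:ℝ) < (i:ℝ) := by exact_mod_cast hi
    rw [show (2:ℝ)+k = (1+k)+1 by ring, Real.rpow_add hci (1+k) 1, Real.rpow_one]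
    ring
  have hm0 : ∀ i : ℕ, 0 ≤ Q i * (i:ℝ)^(2+k) * |h i| := by
    intro i
    rcases Nat.eq_zero_or_pos i with rfl | hi
    · simp [Real.zero_rpow (by positivity : (2:ℝ)+k ≠ 0)]
    · exact mul_nonneg (mul_nonneg (hpos i hi).2.2.le
        (Real.rpow_nonneg (Nat.cast_nonneg i) _)) (abs_nonneg _)
  have hSm1 : Summable (fun i => Q (i+1) * ((i+1:ℕ):ℝ)^(2+k) * |h (i+1)|) := by
    have := (summable_nat_add_iff (f := fun i => Q i * (i:ℝ)^(2+k) * |h i|) 1).2 hsum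
    exact this
  -- ==== key product bounds ====
  have hkey1 : ∀ i : ℕ, 1 ≤ i →
      Q i * Q 1 * a i * ((i+1:ℕ):ℝ)^(1+k) * |h i| ≤
        Q 1 * C₂ * 2^(1+k) * (Q i * (i:ℝ)^(2+k) * |h i|) := by
    intro i hi
    have hQi := (hpos i hi).2.2
    have hai := (hpos i hi).1
    have haub := (hub i hi).1
    have t : a i * ((i+1:ℕ):ℝ)^(1+k) ≤ (C₂*(i:ℝ)) * (2^(1+k)*(i:ℝ)^(1+k)) := by
      have := mul_le_mul haub (hw2 i hi) (by positivity) (by positivity)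
      linarith [this]
    have t2 := mul_le_mul_of_nonneg_right
      (mul_le_mul_of_nonneg_left t (mul_nonneg hQi.le hQ1.le)) (abs_nonneg (h i))
    rw [← he1 i hi]
    nlinarith [t2]
  have hkey2 : ∀ j : ℕ, 1 ≤ j →
      Q j * b j * (j:ℝ)^(1+k) * |h j| ≤ C₂ * (Q j * (j:ℝ)^(2+k) * |h j|) := by
    intro j hj
    have hQj := (hpos j hj).2.2
    have hbub := (hub j hj).2
    have t : b j * (j:ℝ)^(1+k) ≤ (C₂*(j:ℝ)) * (j:ℝ)^(1+k) :=
      mul_le_mul_of_nonneg_right hbub (by positivity)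
    have t2 := mul_le_mul_of_nonneg_right
      (mul_le_mul_of_nonneg_left t hQj.le) (abs_nonneg (h j))
    rw [← he1 j hj]
    nlinarith [t2]
  -- ==== the functions ====
  set f1 : ℕ → ℝ := fun i => if Ntil ≤ i then
      Q i * Q 1 * a i * (h i - h (i + 1) + g * h i) *
        (((i + 1 : ℕ) : ℝ) ^ (1 + k) * Real.sign (h (i + 1))
          - (i : ℝ) ^ (1 + k) * Real.sign (h i)
          - (1 : ℝ) ^ (1 + k) * Real.sign (h 1))
    else 0 with hf1def
  set r : ℕ → ℝ := fun i => if Ntil ≤ i then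
      Q i * a i * (((i + 1 : ℕ) : ℝ) ^ (1 + k) - (i : ℝ) ^ (1 + k)) * |h i|
    else 0 with hrdef
  set A : ℕ → ℝ := fun i => if Ntil ≤ i then
      Q i * Q 1 * a i * ((1+g) * (((i+1:ℕ):ℝ)^(1+k) - (i:ℝ)^(1+k)) + (1+|g|)) * |h i|
    else 0 with hAdef
  set G : ℕ → ℝ := fun i => if Ntil ≤ i then
      Q i * Q 1 * a i * ((((i+1:ℕ):ℝ)^(1+k) - (i:ℝ)^(1+k)) - 1) * |h (i+1)|
    else 0 with hGdef
  set G' : ℕ → ℝ := fun j => if Ntil + 1 ≤ j then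
      Q j * b j * (((j:ℝ)^(1+k) - ((j-1:ℕ):ℝ)^(1+k)) - 1) * |h j|
    else 0 with hG'def
  set Bterm : ℝ :=
      Q Ntil * b Ntil * (((Ntil:ℝ)^(1+k) - ((Ntil-1:ℕ):ℝ)^(1+k)) - 1) * |h Ntil|
    with hBdef
  -- ==== summability ====
  have hSA : Summable A := by
    apply Summable.of_norm_bounded (g :=
      fun i => Q 1 * C₂ * 2^(1+k) * 4 * (Q i * (i:ℝ)^(2+k) * |h i|)) (by
        simpa [mul_assoc] using (hsum.mul_left (Q 1 * C₂ * 2^(1+k) * 4)))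
    intro i
    simp only [hAdef, Real.norm_eq_abs]
    by_cases hi : Ntil ≤ i
    · rw [if_pos hi]
      have hi1 : 1 ≤ i := by omega
      obtain ⟨hai, hbi, hQi⟩ := hpos i hi1
      have hmono := hwmono i
      have hX0 : 0 ≤ (1+g) * (((i+1:ℕ):ℝ)^(1+k) - (i:ℝ)^(1+k)) + (1+|g|) := by
        have := abs_nonneg g
        nlinarith [hg0, hmono]
      have h3 : (1:ℝ) ≤ ((i+1:ℕ):ℝ)^(1+k) := le_trans (hw1 i hi1) hmono
      have h4 : (0:ℝ) ≤ (i:ℝ)^(1+k) := Real.rpow_nonneg (Nat.cast_nonneg _) _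
      have hXle : (1+g) * (((i+1:ℕ):ℝ)^(1+k) - (i:ℝ)^(1+k)) + (1+|g|)
          ≤ 4 * ((i+1:ℕ):ℝ)^(1+k) := by
        have p1 : (0:ℝ) ≤ (1 - g) * (((i+1:ℕ):ℝ)^(1+k) - (i:ℝ)^(1+k)) :=
          mul_nonneg (by linarith [(abs_le.mp hg1).2]) (by linarith)
        linarith [p1, (abs_le.mp hg1).2, h3, h4]
      have c0 : 0 ≤ Q i * Q 1 * a i := mul_nonneg (mul_nonneg hQi.le hQ1.le) hai.le
      have hBabs : |(1+g) * (((i+1:ℕ):ℝ)^(1+k) - (i:ℝ)^(1+k)) + (1+|g|)|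
          ≤ 4 * ((i+1:ℕ):ℝ)^(1+k) := by
        rw [abs_of_nonneg hX0]; exact hXle
      have t := bd_abs4 (Q i * Q 1 * a i) _ (|h i|) _ c0 (abs_nonneg _) hBabs
      refine le_trans t ?_
      have := hkey1 i hi1
      nlinarith [this]
    · rw [if_neg hi]
      have hc4 : (0:ℝ) ≤ Q 1 * C₂ * 2^(1+k) * 4 :=
        mul_nonneg (mul_nonneg (mul_nonneg hQ1.le hC₂.le)
          (by positivity : (0:ℝ) ≤ 2^(1+k))) (by norm_num)
      rw [abs_zero]
      exact mul_nonneg hc4 (hm0 i)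
  have hSG' : Summable G' := by
    apply Summable.of_norm_bounded (g :=
      fun j => C₂ * 2 * (Q j * (j:ℝ)^(2+k) * |h j|)) (by
        simpa [mul_assoc] using (hsum.mul_left (C₂ * 2)))
    intro j
    simp only [hG'def, Real.norm_eq_abs]
    by_cases hj : Ntil + 1 ≤ j
    · rw [if_pos hj]
      have hj1 : 1 ≤ j := by omega
      obtain ⟨haj, hbj, hQj⟩ := hpos j hj1
      have hmono : ((j-1:ℕ):ℝ)^(1+k) ≤ (j:ℝ)^(1+k) := hwmono2 (j-1) j (by omega)
      have h0 : (0:ℝ) ≤ ((j-1:ℕ):ℝ)^(1+k) := Real.rpow_nonneg (Nat.cast_nonneg _) _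
      have h1 : (1:ℝ) ≤ (j:ℝ)^(1+k) := hw1 j hj1
      have hBabs : |((j:ℝ)^(1+k) - ((j-1:ℕ):ℝ)^(1+k)) - 1| ≤ 2 * (j:ℝ)^(1+k) := by
        rw [abs_le]; constructor <;> linarith
      have c0 : 0 ≤ Q j * b j := mul_nonneg hQj.le hbj.le
      have t := bd_abs4 (Q j * b j) _ (|h j|) _ c0 (abs_nonneg _) hBabs
      refine le_trans t ?_
      have := hkey2 j hj1
      nlinarith [this]
    · rw [if_neg hj]
      have hc4 : (0:ℝ) ≤ C₂ * 2 := by linarith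
      rw [abs_zero]
      exact mul_nonneg hc4 (hm0 j)
  have hG_eq : ∀ i, G i = G' (i+1) := by
    intro i
    simp only [hGdef, hG'def, Nat.add_sub_cancel]
    by_cases hi : Ntil ≤ i
    · rw [if_pos hi, if_pos (by omega)]
      have hi1 : 1 ≤ i := by omega
      rw [hdb i hi1]
    · rw [if_neg hi, if_neg (by omega)]
  have hSG : Summable G := by
    have hs : Summable (fun i => G' (i+1)) :=
      (summable_nat_add_iff (f := G') 1).2 hSG'
    exact hs.congr (fun i => (hG_eq i).symm)
  have hSr : Summable r := by
    apply Summable.of_norm_bounded (g :=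
      fun i => C₂ * 2^(1+k) * (Q i * (i:ℝ)^(2+k) * |h i|)) (by
        simpa [mul_assoc] using (hsum.mul_left (C₂ * 2^(1+k))))
    intro i
    simp only [hrdef, Real.norm_eq_abs]
    by_cases hi : Ntil ≤ i
    · rw [if_pos hi]
      have hi1 : 1 ≤ i := by omega
      obtain ⟨hai, hbi, hQi⟩ := hpos i hi1
      have hmono := hwmono i
      have h4 : (0:ℝ) ≤ (i:ℝ)^(1+k) := Real.rpow_nonneg (Nat.cast_nonneg _) _
      have hBabs : |((i+1:ℕ):ℝ)^(1+k) - (i:ℝ)^(1+k)| ≤ ((i+1:ℕ):ℝ)^(1+k) := by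
        rw [abs_le]; constructor <;> linarith
      have c0 : 0 ≤ Q i * a i := mul_nonneg hQi.le hai.le
      have t := bd_abs4 (Q i * a i) _ (|h i|) _ c0 (abs_nonneg _) hBabs
      refine le_trans t ?_
      have haub := (hub i hi1).1
      have t1 : a i * ((i+1:ℕ):ℝ)^(1+k) ≤ (C₂*(i:ℝ)) * (2^(1+k)*(i:ℝ)^(1+k)) := by
        have := mul_le_mul haub (hw2 i hi1) (by positivity) (by positivity)
        linarith [this]
      have t2 := mul_le_mul_of_nonneg_right
        (mul_le_mul_of_nonneg_left t1 hQi.le) (abs_nonneg (h i))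
      rw [← he1 i hi1]
      nlinarith [t2]
    · rw [if_neg hi]
      have hc4 : (0:ℝ) ≤ C₂ * 2^(1+k) :=
        mul_nonneg hC₂.le (by positivity : (0:ℝ) ≤ 2^(1+k))
      rw [abs_zero]
      exact mul_nonneg hc4 (hm0 i)
  have hSf1 : Summable f1 := by
    apply Summable.of_norm_bounded (g :=
      fun i => Q 1 * C₂ * 2^(1+k) * 6 * (Q i * (i:ℝ)^(2+k) * |h i|)
        + C₂ * 3 * (Q (i+1) * ((i+1:ℕ):ℝ)^(2+k) * |h (i+1)|)) (by
        apply Summable.add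
        · simpa [mul_assoc] using (hsum.mul_left (Q 1 * C₂ * 2^(1+k) * 6))
        · simpa [mul_assoc] using (hSm1.mul_left (C₂ * 3)))
    intro i
    simp only [hf1def, Real.norm_eq_abs]
    by_cases hi : Ntil ≤ i
    · rw [if_pos hi]
      have hi1 : 1 ≤ i := by omega
      obtain ⟨hai, hbi, hQi⟩ := hpos i hi1
      have hmono := hwmono i
      have h3 : (1:ℝ) ≤ ((i+1:ℕ):ℝ)^(1+k) := le_trans (hw1 i hi1) hmono
      have h4 : (0:ℝ) ≤ (i:ℝ)^(1+k) := Real.rpow_nonneg (Nat.cast_nonneg _) _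
      have c0 : 0 ≤ Q i * Q 1 * a i := mul_nonneg (mul_nonneg hQi.le hQ1.le) hai.le
      have hY : |h i - h (i+1) + g * h i| ≤ 2*|h i| + |h (i+1)| := by
        have a1 : |h i - h (i+1) + g * h i| ≤ |h i - h (i+1)| + |g * h i| := abs_add_le _ _
        have a2 : |h i - h (i+1)| ≤ |h i| + |h (i+1)| := abs_sub _ _
        have a3 : |g * h i| ≤ 1 * |h i| := by
          rw [abs_mul]
          exact mul_le_mul_of_nonneg_right hg1 (abs_nonneg _)
        linarith
      have hWe : |((i+1:ℕ):ℝ)^(1+k) * Real.sign (h (i+1))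
          - (i:ℝ)^(1+k) * Real.sign (h i) - (1:ℝ)^(1+k) * Real.sign (h 1)|
          ≤ 3 * ((i+1:ℕ):ℝ)^(1+k) := by
        have b1 := bd_abs_sub3 (((i+1:ℕ):ℝ)^(1+k) * Real.sign (h (i+1)))
          ((i:ℝ)^(1+k) * Real.sign (h i)) ((1:ℝ)^(1+k) * Real.sign (h 1))
        have c1 : |((i+1:ℕ):ℝ)^(1+k) * Real.sign (h (i+1))| ≤ ((i+1:ℕ):ℝ)^(1+k) := by
          rw [abs_mul, abs_of_nonneg (by positivity : (0:ℝ) ≤ ((i+1:ℕ):ℝ)^(1+k))]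
          nlinarith [bd_abs_sign (h (i+1)), abs_nonneg (Real.sign (h (i+1)))]
        have c2 : |(i:ℝ)^(1+k) * Real.sign (h i)| ≤ (i:ℝ)^(1+k) := by
          rw [abs_mul, abs_of_nonneg h4]
          nlinarith [bd_abs_sign (h i), abs_nonneg (Real.sign (h i))]
        have c3 : |(1:ℝ)^(1+k) * Real.sign (h 1)| ≤ 1 := by
          rw [Real.one_rpow, one_mul]
          exact bd_abs_sign _
        linarith
      have step : |Q i * Q 1 * a i * (h i - h (i + 1) + g * h i) *
          (((i+1:ℕ):ℝ)^(1+k) * Real.sign (h (i+1))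
            - (i:ℝ)^(1+k) * Real.sign (h i) - (1:ℝ)^(1+k) * Real.sign (h 1))|
          ≤ Q i * Q 1 * a i * ((2*|h i| + |h (i+1)|) * (3 * ((i+1:ℕ):ℝ)^(1+k))) := by
        rw [abs_mul, abs_mul, abs_of_nonneg c0]
        have := mul_le_mul hY hWe (abs_nonneg _) (by positivity)
        rw [mul_assoc]
        exact mul_le_mul_of_nonneg_left this c0
      have hdbw : Q i * Q 1 * a i * ((i+1:ℕ):ℝ)^(1+k) * |h (i+1)|
          ≤ C₂ * (Q (i+1) * ((i+1:ℕ):ℝ)^(2+k) * |h (i+1)|) := by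
        rw [hdb i hi1]
        exact hkey2 (i+1) (by omega)
      have hk1 := hkey1 i hi1
      calc |Q i * Q 1 * a i * (h i - h (i + 1) + g * h i) *
          (((i+1:ℕ):ℝ)^(1+k) * Real.sign (h (i+1))
            - (i:ℝ)^(1+k) * Real.sign (h i) - (1:ℝ)^(1+k) * Real.sign (h 1))|
          ≤ Q i * Q 1 * a i * ((2*|h i| + |h (i+1)|) * (3 * ((i+1:ℕ):ℝ)^(1+k))) := step
        _ = 6 * (Q i * Q 1 * a i * ((i+1:ℕ):ℝ)^(1+k) * |h i|)
            + 3 * (Q i * Q 1 * a i * ((i+1:ℕ):ℝ)^(1+k) * |h (i+1)|) := by ring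
        _ ≤ Q 1 * C₂ * 2^(1+k) * 6 * (Q i * (i:ℝ)^(2+k) * |h i|)
            + C₂ * 3 * (Q (i+1) * ((i+1:ℕ):ℝ)^(2+k) * |h (i+1)|) := by
            nlinarith [hk1, hdbw]
    · rw [if_neg hi]
      have hc5 : (0:ℝ) ≤ Q 1 * C₂ * 2^(1+k) * 6 :=
        mul_nonneg (mul_nonneg (mul_nonneg hQ1.le hC₂.le)
          (by positivity : (0:ℝ) ≤ 2^(1+k))) (by norm_num)
      have n1 := mul_nonneg hc5 (hm0 i)
      have n2 := mul_nonneg (by linarith : (0:ℝ) ≤ C₂ * 3) (hm0 (i+1))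
      simp only [abs_zero]
      linarith
  have hptS : Summable (fun i : ℕ => if i = Ntil then Bterm else 0) :=
    (hasSum_ite_eq Ntil Bterm).summable
  -- ==== step 1 : pointwise f1 ≤ A - G ====
  have hstep1 : ∀ i, f1 i ≤ A i - G i := by
    intro i
    simp only [hf1def, hAdef, hGdef]
    by_cases hi : Ntil ≤ i
    · rw [if_pos hi, if_pos hi, if_pos hi]
      have hi1 : 1 ≤ i := by omega
      obtain ⟨hai, hbi, hQi⟩ := hpos i hi1
      have c0 : 0 ≤ Q i * Q 1 * a i := mul_nonneg (mul_nonneg hQi.le hQ1.le) hai.le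
      have core := bd_core g (h i) (h (i+1)) ((i:ℝ)^(1+k)) (((i+1:ℕ):ℝ)^(1+k))
        ((1:ℝ)^(1+k) * Real.sign (h 1)) hg0
        (Real.rpow_nonneg (Nat.cast_nonneg _) _) (hwmono i)
        (by rw [Real.one_rpow, one_mul]; exact bd_abs_sign _)
      have := mul_le_mul_of_nonneg_left core c0
      nlinarith [this]
    · rw [if_neg hi, if_neg hi, if_neg hi]
      norm_num
  -- ==== termwise dissipativity for i ≥ Ntil ====
  have htermwise : ∀ i, Ntil ≤ i →
      Q i * Q 1 * a i * ((1+g) * (((i+1:ℕ):ℝ)^(1+k) - (i:ℝ)^(1+k)) + (1+|g|)) * |h i|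
        ≤ Q i * b i * (((i:ℝ)^(1+k) - ((i-1:ℕ):ℝ)^(1+k)) - 1) * |h i|
          - (δ/2) * (Q i * a i * (((i+1:ℕ):ℝ)^(1+k) - (i:ℝ)^(1+k)) * |h i|) := by
    intro i hi
    have hi1 : 1 ≤ i := by omega
    have hi2 : 2 ≤ i := by omega
    obtain ⟨hai, hbi, hQi⟩ := hpos i hi1
    have hx2 : (2:ℝ) ≤ (i:ℝ) := by exact_mod_cast hi2
    obtain ⟨P1, P2⟩ := hprop i hi
    rw [Nat.cast_pred (by omega : 0 < i)]
    have hcast : ((i+1:ℕ):ℝ) = (i:ℝ) + 1 := by push_cast; ring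
    rw [hcast]
    set x : ℝ := (i:ℝ) with hxdef
    have hx1 : (1:ℝ) ≤ x - 1 := by linarith
    have hE_lb : (1+k)*(x-1)^k ≤ x^(1+k) - (x-1)^(1+k) := by
      have := bd_rpow_lb k (x-1) hk hx1
      rw [sub_add_cancel] at this
      linarith
    have hD_lb : (1+k)*x^k ≤ (x+1)^(1+k) - x^(1+k) := by
      have := bd_rpow_lb k x hk (by linarith)
      linarith
    have hD_ub : (x+1)^(1+k) - x^(1+k) ≤ (1+k)*(x+1)^k := by
      have := bd_rpow_ub k x hk (by linarith)
      linarith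
    have hkmono : (x-1)^k ≤ x^k := Real.rpow_le_rpow (by linarith) (by linarith) hk.le
    have hMD : max 1 (4*(3*Q 1+δ)/δ) ≤ (x+1)^(1+k) - x^(1+k) := by
      have := mul_le_mul_of_nonneg_left hkmono (by positivity : (0:ℝ) ≤ 1+k)
      linarith
    have hME : max 1 (4*(3*Q 1+δ)/δ) ≤ x^(1+k) - (x-1)^(1+k) := le_trans P1 hE_lb
    have hεD : (1 - δ/(8*(Q 1+δ))) * ((x+1)^(1+k) - x^(1+k)) ≤ x^(1+k) - (x-1)^(1+k) := by
      have hdr : ((x-1)/(x+1))^k = (x-1)^k/(x+1)^k := Real.div_rpow (by linarith) (by linarith) _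
      rw [hdr] at P2
      have hp : (0:ℝ) < (x+1)^k := Real.rpow_pos_of_pos (by linarith) _
      have P2' : (1 - δ/(8*(Q 1+δ))) * (x+1)^k ≤ (x-1)^k := (le_div_iff₀ hp).mp P2
      have h1ε : (0:ℝ) ≤ 1 - δ/(8*(Q 1+δ)) := by linarith
      have s1 : (1 - δ/(8*(Q 1+δ))) * ((x+1)^(1+k) - x^(1+k))
          ≤ (1 - δ/(8*(Q 1+δ))) * ((1+k)*(x+1)^k) :=
        mul_le_mul_of_nonneg_left hD_ub h1ε
      have s3 : (1+k) * ((1 - δ/(8*(Q 1+δ))) * (x+1)^k) ≤ (1+k)*(x-1)^k :=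
        mul_le_mul_of_nonneg_left P2' (by positivity)
      nlinarith [s1, s3, hE_lb]
    have sc := bd_scalar (Q 1) δ g ((x+1)^(1+k) - x^(1+k)) (x^(1+k) - (x-1)^(1+k))
      hQ1 hδ hg1 hg2 hMD hME hεD
    have hfr := hfrag i (by omega)
    have hE1 : (1:ℝ) ≤ x^(1+k) - (x-1)^(1+k) := le_trans (le_max_left _ _) hME
    have m1 := mul_le_mul_of_nonneg_right sc hai.le
    have m2 : (Q 1 + δ) * a i * ((x^(1+k) - (x-1)^(1+k)) - 1)
        ≤ b i * ((x^(1+k) - (x-1)^(1+k)) - 1) :=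
      mul_le_mul_of_nonneg_right hfr (by linarith)
    have m3 : Q 1 * ((1+g) * ((x+1)^(1+k) - x^(1+k)) + (1+|g|)) * a i
        ≤ b i * ((x^(1+k) - (x-1)^(1+k)) - 1)
          - (δ/2) * ((x+1)^(1+k) - x^(1+k)) * a i := by
      nlinarith [m1, m2]
    have m4 := mul_le_mul_of_nonneg_right m3 (mul_nonneg hQi.le (abs_nonneg (h i)))
    nlinarith [m4]
  -- ==== key : A ≤ G' + boundary - (δ/2) r ====
  have key : ∀ i, A i ≤ (G' i + (if i = Ntil then Bterm else 0)) - (δ/2) * r i := by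
    intro i
    by_cases hi : Ntil ≤ i
    · have hmid : (G' i + (if i = Ntil then Bterm else 0))
          = Q i * b i * (((i:ℝ)^(1+k) - ((i-1:ℕ):ℝ)^(1+k)) - 1) * |h i| := by
        by_cases he : i = Ntil
        · rw [if_pos he, hBdef, he]
          simp only [hG'def]
          rw [if_neg (by omega : ¬ Ntil + 1 ≤ Ntil), zero_add]
        · rw [if_neg he]
          simp only [hG'def]
          rw [if_pos (by omega : Ntil + 1 ≤ i), add_zero]
      simp only [hAdef, hrdef, if_pos hi]
      rw [hmid]
      exact htermwise i hi
    · have hne : ¬ i = Ntil := by omega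
      simp only [hAdef, hG'def, hrdef, if_neg hi, if_neg (by omega : ¬ Ntil + 1 ≤ i),
        if_neg hne]
      norm_num
  -- ==== boundary comparison ====
  have hbd : Bterm ≤ Q (Ntil - 1) * Q 1 * a (Ntil - 1) * h Ntil *
      ((Ntil : ℝ) ^ (1 + k) * Real.sign (h Ntil)
        - ((Ntil - 1 : ℕ) : ℝ) ^ (1 + k) * Real.sign (h (Ntil - 1))
        - (1 : ℝ) ^ (1 + k) * Real.sign (h 1)) := by
    have h1 : 1 ≤ Ntil - 1 := by omega
    have edb := hdb (Ntil-1) h1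
    rw [show Ntil - 1 + 1 = Ntil by omega] at edb
    rw [edb]
    have hbb := bd_boundary (h Ntil) (h (Ntil-1)) (((Ntil-1:ℕ):ℝ)^(1+k)) ((Ntil:ℝ)^(1+k))
      ((1:ℝ)^(1+k) * Real.sign (h 1))
      (Real.rpow_nonneg (Nat.cast_nonneg _) _)
      (by rw [Real.one_rpow, one_mul]; exact bd_abs_sign _)
    have c0 : 0 ≤ Q Ntil * b Ntil :=
      mul_nonneg (hpos Ntil (by omega)).2.2.le (hpos Ntil (by omega)).2.1.le
    have := mul_le_mul_of_nonneg_left hbb c0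
    simp only [hBdef]
    nlinarith [this]
  -- ==== tsum assembly ====
  have A1 : (∑' i, f1 i) ≤ (∑' i, A i) - (∑' i, G i) := by
    have t := Summable.tsum_le_tsum hstep1 hSf1 (hSA.sub hSG)
    rwa [Summable.tsum_sub hSA hSG] at t
  have A2 : (∑' i, G i) = (∑' j, G' j) := by
    have h0 : G' 0 = 0 := by
      simp only [hG'def]
      rw [if_neg (by omega)]
    calc (∑' i, G i) = (∑' i, G' (i+1)) := tsum_congr hG_eq
      _ = (∑' j, G' j) := by rw [Summable.tsum_eq_zero_add hSG', h0, zero_add]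
  have A3 : (∑' i, A i) ≤ (∑' j, G' j) + Bterm - (δ/2) * (∑' i, r i) := by
    have hSrhs : Summable (fun i => (G' i + (if i = Ntil then Bterm else 0)) - (δ/2) * r i) :=
      (hSG'.add hptS).sub (hSr.mul_left (δ/2))
    have t := Summable.tsum_le_tsum key hSA hSrhs
    rwa [Summable.tsum_sub (hSG'.add hptS) (hSr.mul_left (δ/2)), Summable.tsum_add hSG' hptS,
      tsum_ite_eq, tsum_mul_left] at t
  have hr0 : ∀ i, 0 ≤ r i := by
    intro i
    simp only [hrdef]
    by_cases hi : Ntil ≤ i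
    · rw [if_pos hi]
      have hi1 : 1 ≤ i := by omega
      obtain ⟨hai, hbi, hQi⟩ := hpos i hi1
      have := hwmono i
      have c0 : 0 ≤ Q i * a i := mul_nonneg hQi.le hai.le
      have : 0 ≤ ((i+1:ℕ):ℝ)^(1+k) - (i:ℝ)^(1+k) := by linarith
      positivity
    · rw [if_neg hi]
  constructor
  · linarith [A1, A2, A3, hbd]
  · have ht : 0 ≤ (∑' i, r i) := tsum_nonneg hr0
    have : (0:ℝ) ≤ δ/2 := by linarith
    exact mul_nonneg this ht
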